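/- arXiv:2006.14798 — 3 statements merged into one kernel-verified Lean document; each statement's English description precedes it below -/
import Mathlib

section
/- For a convex loss problem min_{u,w,z} ℓ(z, y) + β‖w‖₁ subject to z = Σ_j Σ_k (X_k u_j)₊ w_j with ‖u_j‖₂ ≤ 1, the Lagrange dual is max_v −ℓ*(v) subject to |Σ_k vᵀ(X_k u)₊| ≤ β for all u with ‖u‖₂ ≤ 1, where ℓ*(v) = max_z (zᵀv − ℓ(z, y)) is the Fenchel conjugate; in particular weak duality holds: the dual optimal value is at most the primal optimal value. -/
open Matrix

noncomputable def l2norm {n : ℕ} (c : Fin n → ℝ) : ℝ := Real.sqrt (∑ i, c i ^ 2)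

noncomputable def reluV {n h : ℕ} (M : Matrix (Fin n) (Fin h) ℝ) (u : Fin h → ℝ) :
    Fin n → ℝ := fun i => max 0 ((M *ᵥ u) i)

/-- Weak duality for the convex-loss two-layer CNN problem: for every primal feasible
point `(u, w)` (with unit-norm filters) and every dual feasible `v` (satisfying the
semi-infinite constraint), `−ℓ*(v) ≤ ℓ(z) + β‖w‖₁`, where `z` is the network output and
`ℓ*(v)` is the Fenchel conjugate of the loss. -/
theorem weak_duality_convex_loss (n h K m : ℕ)
    (X : Fin K → Matrix (Fin n) (Fin h) ℝ) (β : ℝ) (hβ : 0 < β)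
    (ℓ : (Fin n → ℝ) → ℝ) (hℓ : ConvexOn ℝ Set.univ ℓ)
    (u : Fin m → Fin h → ℝ) (w : Fin m → ℝ) (hu : ∀ j, l2norm (u j) ≤ 1)
    (z : Fin n → ℝ) (hz : z = ∑ j, ∑ k, w j • reluV (X k) (u j))
    (v : Fin n → ℝ)
    (hv : ∀ u' : Fin h → ℝ, l2norm u' ≤ 1 → |∑ k, v ⬝ᵥ reluV (X k) u'| ≤ β)
    (lstar : ℝ) (hlstar : IsLUB {x : ℝ | ∃ z' : Fin n → ℝ, x = z' ⬝ᵥ v - ℓ z'} lstar) :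
    -lstar ≤ ℓ z + β * ∑ j, |w j| := by
  have h1 : z ⬝ᵥ v - ℓ z ≤ lstar := hlstar.1 ⟨z, rfl⟩
  have hzv : z ⬝ᵥ v = ∑ j, w j * ∑ k, v ⬝ᵥ reluV (X k) (u j) := by
    subst hz
    simp only [dotProduct, Finset.sum_apply, Finset.mul_sum, Finset.sum_mul,
      Pi.smul_apply, smul_eq_mul]
    rw [Finset.sum_comm]
    refine Finset.sum_congr rfl fun j _ => ?_
    rw [Finset.sum_comm]
    refine Finset.sum_congr rfl fun k _ => ?_
    refine Finset.sum_congr rfl fun i _ => ?_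
    ring
  have h2 : -(z ⬝ᵥ v) ≤ β * ∑ j, |w j| := by
    calc -(z ⬝ᵥ v) ≤ |z ⬝ᵥ v| := neg_le_abs _
    _ ≤ ∑ j, |w j * ∑ k, v ⬝ᵥ reluV (X k) (u j)| := by
        rw [hzv]; exact Finset.abs_sum_le_sum_abs _ _
    _ ≤ ∑ j, |w j| * β := by
        refine Finset.sum_le_sum fun j _ => ?_
        rw [abs_mul]
        exact mul_le_mul_of_nonneg_left (hv (u j) (hu j)) (abs_nonneg _)
    _ = β * ∑ j, |w j| := by rw [Finset.mul_sum]; exact Finset.sum_congr rfl fun j _ => mul_comm _ _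
  linarith
end

section
/- For the max-pooling dual constraint: for fixed sign patterns, the value max over u in the unit ℓ₂ ball of Σ_k vᵀD(S^k)X_k u subject to (2D(S^k) − I)X_k u ≥ 0 for all k equals, by Lagrangian duality, min over α_k ≥ 0 of ‖Σ_k (vᵀD(S^k)X_k + α_kᵀ(2D(S^k) − I)X_k)‖₂, provided a strictly feasible u exists. -/
open Matrix

theorem sum_dotProduct_aux {K m : ℕ} (f : Fin K → Fin m → ℝ) (u : Fin m → ℝ) :
    (∑ k, f k) ⬝ᵥ u = ∑ k, f k ⬝ᵥ u := by
  simp only [dotProduct, Finset.sum_apply, Finset.sum_mul]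
  exact Finset.sum_comm

open RealInnerProductSpace in
/-- Abstract cone duality: max of `⟪c,u⟫` over the unit ball intersected with the cone
`⟪g j, u⟫ ≥ 0` equals min over nonneg combinations of `‖c + Σ l j • g j‖`. -/
theorem cone_duality_aux {E : Type*} [NormedAddCommGroup E] [InnerProductSpace ℝ E]
    [CompleteSpace E] {ι : Type*} [Fintype ι] [DecidableEq ι] (g : ι → E) (c : E) :
    sSup {x : ℝ | ∃ u : E, ‖u‖ ≤ 1 ∧ (∀ j, 0 ≤ ⟪g j, u⟫) ∧ x = ⟪c, u⟫} =
    sInf {x : ℝ | ∃ l : ι → ℝ, (∀ j, 0 ≤ l j) ∧ x = ‖c + ∑ j, l j • g j‖} := by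
  classical
  set Sp := {x : ℝ | ∃ u : E, ‖u‖ ≤ 1 ∧ (∀ j, 0 ≤ ⟪g j, u⟫) ∧ x = ⟪c, u⟫} with hSp
  set Sd := {x : ℝ | ∃ l : ι → ℝ, (∀ j, 0 ≤ l j) ∧ x = ‖c + ∑ j, l j • g j‖} with hSd
  set C : Set E := {y | ∃ l : ι → ℝ, (∀ j, 0 ≤ l j) ∧ y = ∑ j, l j • g j} with hC
  have hC0 : (0 : E) ∈ C := ⟨fun _ => 0, fun _ => le_refl _, by simp⟩
  have hCadd : ∀ y ∈ C, ∀ z ∈ C, y + z ∈ C := by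
    rintro y ⟨l, hl, rfl⟩ z ⟨m, hm, rfl⟩
    exact ⟨l + m, fun j => add_nonneg (hl j) (hm j),
      by simp [add_smul, Finset.sum_add_distrib]⟩
  have hCsmul : ∀ t : ℝ, 0 ≤ t → ∀ y ∈ C, t • y ∈ C := by
    rintro t ht y ⟨l, hl, rfl⟩
    exact ⟨fun j => t * l j, fun j => mul_nonneg ht (hl j),
      by simp [Finset.smul_sum, smul_smul]⟩
  have hConv : Convex ℝ C := by
    intro y hy z hz a b ha hb hab
    exact hCadd _ (hCsmul a ha y hy) _ (hCsmul b hb z hz)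
  have hgC : ∀ j, g j ∈ C := by
    intro j
    refine ⟨fun j' => if j' = j then 1 else 0, fun j' => by dsimp; split <;> norm_num, ?_⟩
    simp [ite_smul]
  obtain ⟨y0, hy0, hminEq⟩ :=
    exists_norm_eq_iInf_of_complete_convex ⟨0, subset_closure hC0⟩
      isClosed_closure.isComplete hConv.closure (-c)
  have P : ∀ w ∈ closure C, ⟪-c - y0, w - y0⟫ ≤ 0 :=
    (norm_eq_iInf_iff_real_inner_le_zero hConv.closure hy0).mp hminEq
  have hneg : ∀ z : E, -c - z = -(c + z) := fun z => by abel
  have hmin : ∀ w ∈ closure C, ‖c + y0‖ ≤ ‖c + w‖ := by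
    intro w hw
    have h1 : (⨅ w : closure C, ‖-c - w‖) ≤ ‖-c - w‖ :=
      ciInf_le ⟨0, Set.forall_mem_range.2 fun _ => norm_nonneg _⟩ (⟨w, hw⟩ : closure C)
    rw [← hminEq] at h1
    rw [hneg, hneg, norm_neg, norm_neg] at h1
    exact h1
  set d := ‖c + y0‖ with hd
  have hF1 : ∀ j, 0 ≤ ⟪g j, c + y0⟫ := by
    intro j
    have hmem : y0 + g j ∈ closure C :=
      map_mem_closure (f := fun y => y + g j) (continuous_add_right (g j)) hy0
        (fun y hy => hCadd y hy _ (hgC j))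
    have h := P _ hmem
    rw [show y0 + g j - y0 = g j by abel, hneg, inner_neg_left] at h
    rw [real_inner_comm]
    linarith
  have h2a := P 0 (subset_closure hC0)
  rw [zero_sub, hneg, inner_neg_neg] at h2a
  have hmem2 : (2:ℝ) • y0 ∈ closure C :=
    map_mem_closure (continuous_const_smul (2:ℝ)) hy0
      (fun y hy => hCsmul 2 (by norm_num) y hy)
  have h2b := P _ hmem2
  rw [show (2:ℝ) • y0 - y0 = y0 by rw [two_smul]; abel, hneg, inner_neg_left] at h2b
  have hF2 : ⟪c + y0, y0⟫ = 0 := le_antisymm h2a (by linarith)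
  have hcw : ⟪c, c + y0⟫ = ‖c + y0‖ ^ 2 := by
    have h : ⟪c + y0, c + y0⟫ - ⟪y0, c + y0⟫ = ⟪c, c + y0⟫ := by
      rw [← inner_sub_left]
      congr 1
      abel
    have h3 : ⟪y0, c + y0⟫ = ⟪c + y0, y0⟫ := real_inner_comm _ _
    rw [← h, real_inner_self_eq_norm_sq, h3, hF2, sub_zero]
  have hdSp : d ∈ Sp := by
    by_cases hz : c + y0 = 0
    · refine ⟨0, by simp, fun j => by simp, ?_⟩
      simp [hd, hz]
    · refine ⟨‖c + y0‖⁻¹ • (c + y0), ?_, ?_, ?_⟩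
      · rw [norm_smul, norm_inv, norm_norm, inv_mul_cancel₀ (norm_ne_zero_iff.2 hz)]
      · intro j
        rw [real_inner_smul_right]
        exact mul_nonneg (inv_nonneg.2 (norm_nonneg _)) (hF1 j)
      · rw [real_inner_smul_right, hcw, sq, inv_mul_cancel_left₀ (norm_ne_zero_iff.2 hz)]
  have hub : ∀ x ∈ Sp, x ≤ d := by
    rintro x ⟨u, hu1, hufeas, rfl⟩
    have key : ∀ y ∈ C, ⟪c, u⟫ ≤ ‖c + y‖ := by
      rintro y ⟨l, hl, rfl⟩
      have h1 : 0 ≤ ⟪∑ j, l j • g j, u⟫ := by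
        rw [sum_inner]
        refine Finset.sum_nonneg fun j _ => ?_
        rw [real_inner_smul_left]
        exact mul_nonneg (hl j) (hufeas j)
      have h2 : ⟪c, u⟫ ≤ ⟪c + ∑ j, l j • g j, u⟫ := by
        rw [inner_add_left]; linarith
      calc ⟪c, u⟫ ≤ ⟪c + ∑ j, l j • g j, u⟫ := h2
        _ ≤ ‖c + ∑ j, l j • g j‖ * ‖u‖ := real_inner_le_norm _ _
        _ ≤ ‖c + ∑ j, l j • g j‖ * 1 :=
            mul_le_mul_of_nonneg_left hu1 (norm_nonneg _)
        _ = ‖c + ∑ j, l j • g j‖ := mul_one _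
    have hclosed : IsClosed {y : E | ⟪c, u⟫ ≤ ‖c + y‖} :=
      isClosed_le continuous_const ((continuous_const.add continuous_id).norm)
    exact closure_minimal key hclosed hy0
  have hlb : ∀ x ∈ Sd, d ≤ x := by
    rintro x ⟨l, hl, rfl⟩
    exact hmin _ (subset_closure ⟨l, hl, rfl⟩)
  have hSdne : Sd.Nonempty := ⟨_, ⟨fun _ => 0, fun j => le_refl _, rfl⟩⟩
  have hInf : sInf Sd = d := by
    refine le_antisymm ?_ (le_csInf hSdne hlb)
    refine le_of_forall_pos_le_add fun ε hε => ?_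
    obtain ⟨y, hyC, hyd⟩ := Metric.mem_closure_iff.mp hy0 ε hε
    have hmem : ‖c + y‖ ∈ Sd := by
      obtain ⟨l, hl, rfl⟩ := hyC
      exact ⟨l, hl, rfl⟩
    have hle : ‖c + y‖ ≤ d + ε := by
      have h1 : ‖c + y‖ ≤ ‖c + y0‖ + ‖y - y0‖ := by
        calc ‖c + y‖ = ‖(c + y0) + (y - y0)‖ := by congr 1; abel
          _ ≤ ‖c + y0‖ + ‖y - y0‖ := norm_add_le _ _
      have h2 : ‖y - y0‖ < ε := by
        rw [← dist_eq_norm, dist_comm]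
        exact hyd
      linarith
    exact le_trans (csInf_le ⟨d, hlb⟩ hmem) hle
  have hSupEq : sSup Sp = d :=
    le_antisymm (csSup_le ⟨d, hdSp⟩ hub) (le_csSup ⟨d, hub⟩ hdSp)
  rw [hSupEq, hInf]

/-- Lagrangian duality for the fixed-sign-pattern subproblem: under strict feasibility,
the maximum of `Σ_k vᵀ D(S^k) X_k u` over the unit ℓ₂ ball intersected with the cone
constraints `(2D(S^k) − I) X_k u ≥ 0` equals
`min_{α_k ≥ 0} ‖Σ_k (vᵀ D(S^k) X_k + α_kᵀ (2D(S^k) − I) X_k)‖₂`. -/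
theorem fixed_pattern_duality (n h K : ℕ)
    (X : Fin K → Matrix (Fin n) (Fin h) ℝ) (v : Fin n → ℝ)
    (S : Fin K → Set (Fin n)) [∀ k, DecidablePred (· ∈ S k)]
    (D : Fin K → Matrix (Fin n) (Fin n) ℝ)
    (hD : ∀ k, D k = Matrix.diagonal (fun i => if i ∈ S k then (1 : ℝ) else 0))
    (hslater : ∃ u : Fin h → ℝ, l2norm u < 1 ∧
      ∀ k, ∀ i, 0 < ((((2 : ℝ) • D k - 1) * X k) *ᵥ u) i) :
    sSup {x : ℝ | ∃ u : Fin h → ℝ, l2norm u ≤ 1 ∧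
        (∀ k, ∀ i, 0 ≤ ((((2 : ℝ) • D k - 1) * X k) *ᵥ u) i) ∧
        x = ∑ k, v ⬝ᵥ ((D k * X k) *ᵥ u)} =
    sInf {x : ℝ | ∃ α : Fin K → Fin n → ℝ, (∀ k i, 0 ≤ α k i) ∧
        x = l2norm (∑ k,
          (Matrix.vecMul v (D k * X k) +
            Matrix.vecMul (α k) (((2 : ℝ) • D k - 1) * X k)))} := by
  classical
  set E := EuclideanSpace ℝ (Fin h)
  set toE : (Fin h → ℝ) ≃ₗ[ℝ] E := (WithLp.linearEquiv 2 ℝ (Fin h → ℝ)).symm with htoE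
  have htoE_apply : ∀ (a : Fin h → ℝ) (i : Fin h), toE a i = a i := fun a i => rfl
  have hl2 : ∀ a : Fin h → ℝ, l2norm a = ‖toE a‖ := by
    intro a
    rw [EuclideanSpace.norm_eq, l2norm]
    congr 1
    refine Finset.sum_congr rfl fun i _ => ?_
    rw [htoE_apply, Real.norm_eq_abs, sq_abs]
  have hip : ∀ a b : Fin h → ℝ, (inner ℝ (toE a) (toE b) : ℝ) = a ⬝ᵥ b := by
    intro a b
    rw [PiLp.inner_apply]
    simp [htoE_apply, dotProduct, mul_comm]
  set g0 : Fin K × Fin n → Fin h → ℝ :=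
    fun p => ((((2 : ℝ) • D p.1 - 1) * X p.1 : Matrix (Fin n) (Fin h) ℝ)) p.2 with hg0
  set c0 : Fin h → ℝ := ∑ k, Matrix.vecMul v (D k * X k) with hc0
  have key := cone_duality_aux (E := E) (ι := Fin K × Fin n)
    (fun p => toE (g0 p)) (toE c0)
  have hrow : ∀ (k : Fin K) (i : Fin n) (u : Fin h → ℝ),
      ((((2 : ℝ) • D k - 1) * X k) *ᵥ u) i = g0 (k, i) ⬝ᵥ u := fun k i u => rfl
  have hobj : ∀ u : Fin h → ℝ, ∑ k, v ⬝ᵥ ((D k * X k) *ᵥ u) = c0 ⬝ᵥ u := by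
    intro u
    rw [hc0, sum_dotProduct_aux]
    exact Finset.sum_congr rfl fun k _ => Matrix.dotProduct_mulVec v _ u
  have hdualvec : ∀ α : Fin K → Fin n → ℝ,
      (∑ k, (Matrix.vecMul v (D k * X k) +
        Matrix.vecMul (α k) (((2 : ℝ) • D k - 1) * X k))) =
      c0 + ∑ p : Fin K × Fin n, α p.1 p.2 • g0 p := by
    intro α
    rw [Finset.sum_add_distrib, hc0]
    congr 1
    rw [← Finset.univ_product_univ, Finset.sum_product]
    refine Finset.sum_congr rfl fun k _ => ?_
    funext j
    simp only [Matrix.vecMul, dotProduct, Finset.sum_apply, Pi.smul_apply,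
      smul_eq_mul, hg0]
  have hsetp : {x : ℝ | ∃ u : Fin h → ℝ, l2norm u ≤ 1 ∧
        (∀ k, ∀ i, 0 ≤ ((((2 : ℝ) • D k - 1) * X k) *ᵥ u) i) ∧
        x = ∑ k, v ⬝ᵥ ((D k * X k) *ᵥ u)} =
      {x : ℝ | ∃ u : E, ‖u‖ ≤ 1 ∧ (∀ j : Fin K × Fin n, 0 ≤ (inner ℝ (toE (g0 j)) u : ℝ)) ∧
        x = (inner ℝ (toE c0) u : ℝ)} := by
    ext x
    constructor
    · rintro ⟨u, hu1, hu2, rfl⟩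
      refine ⟨toE u, by rwa [← hl2], fun j => ?_, ?_⟩
      · rw [hip]
        have hh := hu2 j.1 j.2
        rw [hrow] at hh
        exact hh
      · rw [hip, hobj]
    · rintro ⟨u, hu1, hu2, rfl⟩
      refine ⟨toE.symm u, ?_, fun k i => ?_, ?_⟩
      · rwa [hl2, toE.apply_symm_apply]
      · rw [hrow, ← hip, toE.apply_symm_apply]
        exact hu2 (k, i)
      · rw [hobj, ← hip, toE.apply_symm_apply]
  have hsetd : {x : ℝ | ∃ α : Fin K → Fin n → ℝ, (∀ k i, 0 ≤ α k i) ∧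
        x = l2norm (∑ k,
          (Matrix.vecMul v (D k * X k) +
            Matrix.vecMul (α k) (((2 : ℝ) • D k - 1) * X k)))} =
      {x : ℝ | ∃ l : Fin K × Fin n → ℝ, (∀ j, 0 ≤ l j) ∧
        x = ‖toE c0 + ∑ j : Fin K × Fin n, l j • toE (g0 j)‖} := by
    ext x
    have hnorm : ∀ α : Fin K → Fin n → ℝ,
        l2norm (∑ k, (Matrix.vecMul v (D k * X k) +
          Matrix.vecMul (α k) (((2 : ℝ) • D k - 1) * X k))) =
        ‖toE c0 + ∑ p : Fin K × Fin n, α p.1 p.2 • toE (g0 p)‖ := by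
      intro α
      have hsum : toE (∑ p : Fin K × Fin n, α p.1 p.2 • g0 p) =
          ∑ p : Fin K × Fin n, α p.1 p.2 • toE (g0 p) := by
        rw [map_sum]
        exact Finset.sum_congr rfl fun p _ => toE.map_smul _ _
      rw [hl2, hdualvec, map_add, hsum]
    constructor
    · rintro ⟨α, hα, rfl⟩
      exact ⟨fun p => α p.1 p.2, fun p => hα p.1 p.2, hnorm α⟩
    · rintro ⟨l, hl, rfl⟩
      exact ⟨fun k i => l (k, i), fun k i => hl (k, i), (hnorm fun k i => l (k, i)).symm⟩
  rw [hsetp, hsetd]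
  exact key
end

section
/- In the two-layer linear circular CNN problem, the rescaled problem min over {u_j, w_j} with ‖u_j‖₂ ≤ 1 of (1/2)‖Σ_j X U_j w_j − y‖₂² + β Σ_j ‖w_j‖₂ has dual max_v −(1/2)‖v − y‖₂² + (1/2)‖y‖₂² subject to ‖vᵀ X̃‖_∞ ≤ β/√d, and the dual of this dual is min over z ∈ ℂ^d of (1/2)‖X̃z − y‖₂² + (β/√d)‖z‖₁, where X̃ = XF and F is the DFT matrix; strong duality holds between the latter two (convex) problems. -/
open Matrix

/-- The unitary DFT matrix. -/
noncomputable def dftMatrix (d : ℕ) : Matrix (Fin d) (Fin d) ℂ :=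
  Matrix.of fun j k =>
    (1 / (Real.sqrt d : ℂ)) *
      Complex.exp (-2 * Real.pi * Complex.I * ((j : ℕ) * (k : ℕ)) / d)

open Complex

noncomputable def ce (d : ℕ) (m : ℤ) : ℂ := Complex.exp (2 * Real.pi * Complex.I * m / d)

lemma ce_add (d : ℕ) (m m' : ℤ) : ce d (m + m') = ce d m * ce d m' := by
  rw [ce, ce, ce, ← Complex.exp_add]
  congr 1
  push_cast
  ring

lemma ce_dvd_eq_one (d : ℕ) {m : ℤ} (h : (d : ℤ) ∣ m) : ce d m = 1 := by
  rcases h with ⟨t, rfl⟩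
  rcases Nat.eq_zero_or_pos d with rfl | hd
  · simp [ce]
  · rw [ce]
    have hd0 : (d : ℂ) ≠ 0 := by exact_mod_cast Nat.cast_ne_zero.mpr hd.ne'
    have : 2 * (Real.pi:ℂ) * Complex.I * ((d:ℤ) * t : ℤ) / d = (t : ℤ) * (2 * Real.pi * Complex.I) := by
      push_cast
      field_simp
    rw [this, Complex.exp_int_mul_two_pi_mul_I]

lemma ce_eq_of_dvd (d : ℕ) {m m' : ℤ} (h : (d : ℤ) ∣ m - m') : ce d m = ce d m' := by
  have : m = m' + (m - m') := by ring
  rw [this, ce_add, ce_dvd_eq_one d h, mul_one]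

lemma conj_ce (d : ℕ) (m : ℤ) : (starRingEnd ℂ) (ce d m) = ce d (-m) := by
  rw [ce, ce, ← Complex.exp_conj]
  congr 1
  simp only [map_div₀, _root_.map_mul, map_ofNat, Complex.conj_I, Complex.conj_ofReal,
    map_intCast, map_natCast]
  push_cast
  ring

lemma ce_pow (d : ℕ) (m : ℤ) (k : ℕ) : ce d m ^ k = ce d (m * k) := by
  rw [ce, ce, ← Complex.exp_nat_mul]
  congr 1
  push_cast
  ring

lemma sum_ce (d : ℕ) (hd : 0 < d) (m : ℤ) :
    ∑ k : Fin d, ce d (m * k) = if (d : ℤ) ∣ m then (d : ℂ) else 0 := by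
  have h1 : ∀ k : Fin d, ce d (m * k) = ce d m ^ (k : ℕ) := fun k => (ce_pow d m k).symm
  simp only [h1]
  by_cases h : (d : ℤ) ∣ m
  · rw [if_pos h]
    have : ∀ k : Fin d, ce d m ^ (k:ℕ) = 1 := fun k => by
      rw [ce_dvd_eq_one d h, one_pow]
    simp [this]
  · rw [if_neg h]
    have hne : ce d m ≠ 1 := by
      intro hc
      apply h
      rw [ce, Complex.exp_eq_one_iff] at hc
      obtain ⟨t, ht⟩ := hc
      have hd0 : (d : ℂ) ≠ 0 := Nat.cast_ne_zero.mpr hd.ne'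
      have hpi : (Real.pi : ℂ) ≠ 0 := by exact_mod_cast Real.pi_ne_zero
      have h2 : (2 * (Real.pi:ℂ) * Complex.I) ≠ 0 := by
        simp [Complex.I_ne_zero, hpi]
      have hm : (m : ℂ) = (t * d : ℤ) := by
        have ht' : 2 * (Real.pi:ℂ) * Complex.I * m / d = t * (2 * Real.pi * Complex.I) := ht
        field_simp at ht'
        push_cast
        apply mul_left_cancel₀ h2
        linear_combination (2 * (Real.pi:ℂ) * Complex.I) * ht'
      have hmm : m = t * d := by exact_mod_cast hm
      exact ⟨t, by linarith [hmm]⟩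
    rw [Fin.sum_univ_eq_sum_range, geom_sum_eq hne]
    have : ce d m ^ d = 1 := by
      rw [ce_pow]
      exact ce_dvd_eq_one d ⟨m, by ring⟩
    rw [this]
    simp

lemma dft_apply (d : ℕ) (j k : Fin d) :
    dftMatrix d j k = (1 / (Real.sqrt d : ℂ)) * ce d (-((j : ℤ) * (k : ℤ))) := by
  rw [dftMatrix, ce]
  simp only [Matrix.of_apply]
  congr 2
  push_cast
  ring

lemma sqrt_d_sq (d : ℕ) : ((Real.sqrt d : ℝ) : ℂ) * ((Real.sqrt d : ℝ) : ℂ) = (d : ℂ) := by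
  rw [← Complex.ofReal_mul, Real.mul_self_sqrt (Nat.cast_nonneg d)]
  norm_cast

lemma fin_dvd_sub_iff {d : ℕ} (hd : 0 < d) (j j' : Fin d) :
    (d : ℤ) ∣ ((j : ℤ) - (j' : ℤ)) ↔ j = j' := by
  constructor
  · intro ⟨t, ht⟩
    have h1 : (j : ℤ) < d := by exact_mod_cast j.isLt
    have h2 : (j' : ℤ) < d := by exact_mod_cast j'.isLt
    have h3 : 0 ≤ (j : ℤ) := Int.ofNat_nonneg _
    have h4 : 0 ≤ (j' : ℤ) := Int.ofNat_nonneg _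
    have : (j : ℤ) = (j' : ℤ) := by
      rcases lt_trichotomy t 0 with h | h | h
      · have ht1 : t ≤ -1 := by omega
        nlinarith
      · subst h; omega
      · have ht1 : 1 ≤ t := h
        nlinarith
    exact Fin.ext (by exact_mod_cast this)
  · rintro rfl; simp

lemma dft_orth (d : ℕ) (hd : 0 < d) (j j' : Fin d) :
    ∑ k : Fin d, dftMatrix d j k * (starRingEnd ℂ) (dftMatrix d j' k) =
      if j = j' then 1 else 0 := by
  have key : ∀ k : Fin d, dftMatrix d j k * (starRingEnd ℂ) (dftMatrix d j' k) =
      (1 / (d : ℂ)) * ce d (((j' : ℤ) - (j : ℤ)) * (k : ℤ)) := by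
    intro k
    rw [dft_apply, dft_apply, _root_.map_mul, conj_ce]
    rw [map_div₀, _root_.map_one, Complex.conj_ofReal]
    have : -(-((j' : ℤ) * k)) + -((j : ℤ) * k) = ((j' : ℤ) - (j : ℤ)) * k := by ring
    rw [show (-((j:ℤ)*k)) = (-((j:ℤ)*k) + 0) by ring]
    calc (1 / ((Real.sqrt d : ℝ) : ℂ)) * ce d (-((j:ℤ)*k) + 0) *
          ((1 / ((Real.sqrt d : ℝ) : ℂ)) * ce d (-(-((j':ℤ)*k))))
        = (1 / (((Real.sqrt d : ℝ):ℂ) * ((Real.sqrt d : ℝ):ℂ))) *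
            (ce d (-((j:ℤ)*k)) * ce d ((j':ℤ)*k)) := by
          rw [ce_add, ce_dvd_eq_one d (dvd_zero _), mul_one]
          ring_nf
        _ = (1 / (d : ℂ)) * ce d (((j' : ℤ) - (j : ℤ)) * (k : ℤ)) := by
          rw [sqrt_d_sq, ← ce_add]
          congr 2
          ring
  simp only [key]
  rw [← Finset.mul_sum, sum_ce d hd]
  by_cases h : j = j'
  · subst h
    rw [if_pos (by simp), if_pos rfl]
    have : (d : ℂ) ≠ 0 := Nat.cast_ne_zero.mpr hd.ne'
    field_simp
  · rw [if_neg, if_neg h, mul_zero]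
    intro hc
    exact h ((fin_dvd_sub_iff hd j' j).mp hc).symm

/-- Parseval for row vectors. -/
lemma vecMul_dft_inner {d : ℕ} (hd : 0 < d) (b c : Fin d → ℂ) :
    ∑ k, (vecMul b (dftMatrix d)) k * (starRingEnd ℂ) ((vecMul c (dftMatrix d)) k) =
      ∑ t, b t * (starRingEnd ℂ) (c t) := by
  simp only [vecMul, dotProduct, Finset.sum_mul, map_sum, _root_.map_mul, Finset.mul_sum]
  rw [Finset.sum_comm]
  refine Finset.sum_congr rfl (fun t _ => ?_)
  have h1 : ∀ t' : Fin d, ∑ k : Fin d,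
      b t' * dftMatrix d t' k * ((starRingEnd ℂ) (c t) * (starRingEnd ℂ) (dftMatrix d t k)) =
      b t' * (starRingEnd ℂ) (c t) * (if t' = t then 1 else 0) := by
    intro t'
    rw [← dft_orth d hd t' t, Finset.mul_sum]
    refine Finset.sum_congr rfl (fun k _ => ?_)
    ring
  rw [Finset.sum_comm]
  simp only [h1, mul_ite, mul_one, mul_zero]
  simp

noncomputable def mu {d : ℕ} (u : Fin d → ℝ) (k : Fin d) : ℂ :=
  ∑ s : Fin d, (u s : ℂ) * ce d ((s : ℤ) * (k : ℤ))

/-- Fin d subtraction mod relation -/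
lemma fin_sub_coe {d : ℕ} (hd : 0 < d) (j s : Fin d) :
    (d : ℤ) ∣ (((j - s : Fin d) : ℤ) - ((j : ℤ) - (s : ℤ))) := by
  haveI : NeZero d := ⟨hd.ne'⟩
  have h2 : ((j - s : Fin d) : ℕ) = ((d - (s:ℕ)) + (j:ℕ)) % d := congrArg Fin.val (Fin.sub_def j s)
  have hs : (s : ℕ) < d := s.isLt
  have h4 : (d:ℤ) ∣ ((((d - (s:ℕ)) + (j:ℕ) : ℕ)) : ℤ) - (((j - s : Fin d) : ℕ) : ℤ) := by
    rw [h2]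
    exact (Nat.mod_modEq _ d).dvd
  obtain ⟨t, ht⟩ := h4
  refine ⟨1 - t, ?_⟩
  have hc : ((((d - (s:ℕ)) + (j:ℕ) : ℕ)) : ℤ) = (d:ℤ) - (s:ℤ) + (j:ℤ) := by
    push_cast [Nat.cast_sub hs.le]
    ring
  rw [hc] at ht
  have : ((j - s : Fin d) : ℤ) = (((j - s : Fin d) : ℕ) : ℤ) := rfl
  rw [this]
  linarith [ht]

lemma dft_shift {d : ℕ} (hd : 0 < d) (j s k : Fin d) :
    dftMatrix d (j - s) k = dftMatrix d j k * ce d ((s : ℤ) * (k : ℤ)) := by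
  rw [dft_apply, dft_apply, mul_assoc, ← ce_add]
  congr 1
  apply ce_eq_of_dvd
  have h := fin_sub_coe hd j s
  have : (-(((j - s : Fin d) : ℤ) * (k : ℤ)) - (-((j : ℤ) * (k : ℤ)) + (s : ℤ) * (k : ℤ)))
      = -(k : ℤ) * ((((j - s : Fin d) : ℤ)) - ((j : ℤ) - (s : ℤ))) := by ring
  rw [this]
  exact Dvd.dvd.mul_left h _

/-- Circulant times DFT: column scaling. -/
lemma circ_dft {d : ℕ} (hd : 0 < d) (u : Fin d → ℝ) (j k : Fin d) :
    (((Matrix.circulant u).map Complex.ofReal) * dftMatrix d) j k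
      = dftMatrix d j k * mu u k := by
  haveI : NeZero d := ⟨hd.ne'⟩
  rw [Matrix.mul_apply]
  have h1 : ∀ t : Fin d, ((Matrix.circulant u).map Complex.ofReal) j t * dftMatrix d t k
      = (u (j - t) : ℂ) * dftMatrix d t k := by
    intro t; simp [Matrix.circulant_apply]
  simp only [h1]
  rw [← Equiv.sum_comp (Equiv.subLeft j) (fun t => (u (j - t) : ℂ) * dftMatrix d t k)]
  simp only [Equiv.subLeft_apply, sub_sub_cancel]
  rw [mu, Finset.mul_sum]
  refine Finset.sum_congr rfl (fun s _ => ?_)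
  rw [dft_shift hd j s k]
  ring

/-- Parseval for the symbol. -/
lemma mu_parseval {d : ℕ} (hd : 0 < d) (u : Fin d → ℝ) :
    ∑ k, Complex.normSq (mu u k) = (d : ℝ) * ∑ s, (u s) ^ 2 := by
  have key : ∑ k, (mu u k * (starRingEnd ℂ) (mu u k)) = ∑ s : Fin d, (d:ℂ) * (u s:ℂ)^2 := by
    simp only [mu, Finset.sum_mul, map_sum, _root_.map_mul, Finset.mul_sum, conj_ce,
      Complex.conj_ofReal]
    rw [Finset.sum_comm]
    refine Finset.sum_congr rfl (fun s' _ => ?_)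
    rw [Finset.sum_comm]
    have h3 : ∀ s : Fin d, ∑ k : Fin d,
        (u s : ℂ) * ce d ((s:ℤ) * k) * ((u s' : ℂ) * ce d (-((s':ℤ) * k)))
        = (u s : ℂ) * (u s' : ℂ) * (if s = s' then (d:ℂ) else 0) := by
      intro s
      have hsum : ∑ k : Fin d, (u s : ℂ) * ce d ((s:ℤ)*k) * ((u s' : ℂ) * ce d (-((s':ℤ)*k)))
          = (u s:ℂ) * (u s':ℂ) * ∑ k : Fin d, ce d (((s:ℤ)-(s':ℤ))*k) := by
        rw [Finset.mul_sum]
        refine Finset.sum_congr rfl (fun k _ => ?_)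
        have he : (((s:ℤ)-(s':ℤ))*(k:ℤ)) = ((s:ℤ)*(k:ℤ)) + (-((s':ℤ)*(k:ℤ))) := by ring
        rw [he, ce_add]
        ring
      rw [hsum, sum_ce d hd, if_congr (fin_dvd_sub_iff hd s s') rfl rfl]
    simp only [h3, mul_ite, mul_zero]
    rw [Finset.sum_ite_eq' Finset.univ s' (fun s => (u s : ℂ) * (u s' : ℂ) * (d:ℂ))]
    simp
    ring
  have h5 : ((∑ k, Complex.normSq (mu u k) : ℝ) : ℂ) = (((d:ℝ) * ∑ s, u s ^2 : ℝ) : ℂ) := by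
    push_cast
    rw [Finset.mul_sum, ← key]
    refine Finset.sum_congr rfl (fun k _ => ?_)
    rw [Complex.mul_conj]
  exact_mod_cast h5

lemma key_bound {n d : ℕ} (hd : 0 < d) (X : Matrix (Fin n) (Fin d) ℝ) (v : Fin n → ℝ)
    (β : ℝ) (hβ : 0 < β)
    (hv : ∀ k, norm ((vecMul (fun i => ((v i : ℝ) : ℂ))
        (X.map Complex.ofReal * dftMatrix d)) k) ≤ β / Real.sqrt d)
    (u : Fin d → ℝ) (hu : Real.sqrt (∑ s, u s ^ 2) ≤ 1) (w : Fin d → ℝ) :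
    ∑ i, v i * (X *ᵥ (Matrix.circulant u *ᵥ w)) i ≤ β * Real.sqrt (∑ k, w k ^ 2) := by
  classical
  set vC : Fin n → ℂ := fun i => ((v i : ℝ) : ℂ) with hvC
  set XC := X.map Complex.ofReal with hXC
  set CC := (Matrix.circulant u).map Complex.ofReal with hCC
  set b : Fin d → ℝ := vecMul v (X * Matrix.circulant u) with hb
  set bC : Fin d → ℂ := vecMul vC (XC * CC) with hbC
  set gv : Fin d → ℂ := vecMul vC (XC * dftMatrix d) with hgv
  -- step 1 : rewrite LHS as b ⬝ᵥ w
  have step1 : ∑ i, v i * (X *ᵥ (Matrix.circulant u *ᵥ w)) i = ∑ k, b k * w k := by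
    have : ∑ i, v i * (X *ᵥ (Matrix.circulant u *ᵥ w)) i
        = v ⬝ᵥ ((X * Matrix.circulant u) *ᵥ w) := by
      rw [Matrix.mulVec_mulVec]; rfl
    rw [this, Matrix.dotProduct_mulVec]; rfl
  -- cast of b
  have hcast : ∀ k, bC k = ((b k : ℝ) : ℂ) := by
    intro k
    simp only [hbC, hb, vecMul, dotProduct, Matrix.mul_apply, Matrix.map_apply, hXC, hCC, hvC]
    push_cast
    rfl
  -- spectral formula
  have hspec : ∀ k, vecMul bC (dftMatrix d) k = gv k * mu u k := by
    intro k
    have hmat : XC * (CC * dftMatrix d) = Matrix.of (fun j k => (XC * dftMatrix d) j k * mu u k) := by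
      ext j k'
      rw [Matrix.mul_apply]
      refine (Finset.sum_congr rfl (fun t _ => congrArg (XC j t * ·) (circ_dft hd u t k'))).trans ?_
      rw [Matrix.of_apply, Matrix.mul_apply, Finset.sum_mul]
      refine Finset.sum_congr rfl (fun t _ => ?_)
      ring
    rw [hbC, Matrix.vecMul_vecMul, Matrix.mul_assoc, hmat]
    simp only [vecMul, dotProduct, Matrix.of_apply, hgv, Finset.sum_mul]
    exact Finset.sum_congr rfl (fun x _ => by ring)
  -- Parseval
  have hpars : ∑ k, Complex.normSq (bC k) = ∑ k, Complex.normSq (gv k * mu u k) := by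
    have h1 := vecMul_dft_inner hd bC bC
    simp only [hspec, Complex.mul_conj] at h1
    have h2 : ((∑ k, Complex.normSq (gv k * mu u k) : ℝ) : ℂ)
        = ((∑ t, Complex.normSq (bC t) : ℝ) : ℂ) := by
      push_cast
      exact h1
    exact_mod_cast h2.symm
  -- bound
  have hc : 0 < Real.sqrt d := Real.sqrt_pos.mpr (by exact_mod_cast hd)
  have hsum_u : ∑ s, u s ^ 2 ≤ 1 := by
    have h0 : 0 ≤ ∑ s, u s ^ 2 := Finset.sum_nonneg (fun s _ => sq_nonneg _)
    calc ∑ s, u s ^ 2 = Real.sqrt (∑ s, u s ^ 2) ^ 2 := (Real.sq_sqrt h0).symm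
      _ ≤ 1 ^ 2 := pow_le_pow_left₀ (Real.sqrt_nonneg _) hu 2
      _ = 1 := one_pow 2
  have hbound : ∑ k, b k ^ 2 ≤ β ^ 2 := by
    have e1 : ∑ k, b k ^ 2 = ∑ k, Complex.normSq (bC k) := by
      refine Finset.sum_congr rfl (fun k _ => ?_)
      rw [hcast k, Complex.normSq_ofReal]
      ring
    rw [e1, hpars]
    have e2 : ∀ k, Complex.normSq (gv k * mu u k) ≤ (β / Real.sqrt d) ^ 2 * Complex.normSq (mu u k) := by
      intro k
      rw [Complex.normSq_mul]
      have := hv k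
      have habs : Complex.normSq (gv k) ≤ (β / Real.sqrt d) ^ 2 := by
        rw [← Complex.sq_norm]
        exact pow_le_pow_left₀ (norm_nonneg _) this 2
      exact mul_le_mul_of_nonneg_right habs (Complex.normSq_nonneg _)
    calc ∑ k, Complex.normSq (gv k * mu u k)
        ≤ ∑ k, (β / Real.sqrt d) ^ 2 * Complex.normSq (mu u k) :=
          Finset.sum_le_sum (fun k _ => e2 k)
      _ = (β / Real.sqrt d) ^ 2 * ((d : ℝ) * ∑ s, u s ^ 2) := by
          rw [← Finset.mul_sum, mu_parseval hd]
      _ ≤ (β / Real.sqrt d) ^ 2 * ((d : ℝ) * 1) := by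
          apply mul_le_mul_of_nonneg_left _ (sq_nonneg _)
          exact mul_le_mul_of_nonneg_left hsum_u (Nat.cast_nonneg d)
      _ = β ^ 2 := by
          rw [div_pow, Real.sq_sqrt (Nat.cast_nonneg d)]
          field_simp
  -- Cauchy-Schwarz
  rw [step1]
  have hCS : (∑ k, b k * w k) ^ 2 ≤ (∑ k, b k ^ 2) * ∑ k, w k ^ 2 :=
    Finset.sum_mul_sq_le_sq_mul_sq Finset.univ b w
  have hw0 : 0 ≤ ∑ k, w k ^ 2 := Finset.sum_nonneg (fun k _ => sq_nonneg _)
  have hb0 : 0 ≤ ∑ k, b k ^ 2 := Finset.sum_nonneg (fun k _ => sq_nonneg _)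
  calc ∑ k, b k * w k ≤ |∑ k, b k * w k| := le_abs_self _
    _ = Real.sqrt ((∑ k, b k * w k) ^ 2) := (Real.sqrt_sq_eq_abs _).symm
    _ ≤ Real.sqrt ((∑ k, b k ^ 2) * ∑ k, w k ^ 2) := Real.sqrt_le_sqrt hCS
    _ = Real.sqrt (∑ k, b k ^ 2) * Real.sqrt (∑ k, w k ^ 2) := Real.sqrt_mul hb0 _
    _ ≤ β * Real.sqrt (∑ k, w k ^ 2) := by
        apply mul_le_mul_of_nonneg_right _ (Real.sqrt_nonneg _)
        calc Real.sqrt (∑ k, b k ^ 2) ≤ Real.sqrt (β ^ 2) := Real.sqrt_le_sqrt hbound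
          _ = β := Real.sqrt_sq hβ.le

section Opt
variable {n d : ℕ}

noncomputable def G (A : Matrix (Fin n) (Fin d) ℂ) (yC : Fin n → ℂ) (c : ℝ) (z : Fin d → ℂ) : ℝ :=
  (1 / 2) * (∑ i, norm ((A *ᵥ z) i - yC i) ^ 2) + c * ∑ k, norm (z k)

lemma G_nonneg (A : Matrix (Fin n) (Fin d) ℂ) (yC : Fin n → ℂ) {c : ℝ} (hc : 0 ≤ c) (z : Fin d → ℂ) :
    0 ≤ G A yC c z := by
  apply add_nonneg
  · apply mul_nonneg (by norm_num)
    exact Finset.sum_nonneg fun i _ => sq_nonneg _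
  · exact mul_nonneg hc (Finset.sum_nonneg fun k _ => norm_nonneg _)

lemma G_continuous (A : Matrix (Fin n) (Fin d) ℂ) (yC : Fin n → ℂ) (c : ℝ) :
    Continuous (G A yC c) := by
  apply Continuous.add
  · apply Continuous.mul continuous_const
    apply continuous_finset_sum
    intro i _
    have hrw : (fun z : Fin d → ℂ => norm ((A *ᵥ z) i - yC i) ^ 2)
        = fun z => norm ((∑ k, A i k * z k) - yC i) ^ 2 := rfl
    rw [hrw]
    apply Continuous.pow
    apply continuous_norm.comp
    apply Continuous.sub _ continuous_const
    exact continuous_finset_sum _ fun k _ => continuous_const.mul (continuous_apply k)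
  · apply Continuous.mul continuous_const
    apply continuous_finset_sum
    intro k _
    exact continuous_norm.comp (continuous_apply k)

lemma exists_min (A : Matrix (Fin n) (Fin d) ℂ) (yC : Fin n → ℂ) {c : ℝ} (hc : 0 < c) :
    ∃ z₀, ∀ z, G A yC c z₀ ≤ G A yC c z := by
  classical
  set R : ℝ := G A yC c 0 / c + 1 with hR
  have hG0 : 0 ≤ G A yC c 0 := G_nonneg A yC hc.le 0
  have hR0 : 0 < R := by positivity
  set K := Metric.closedBall (0 : Fin d → ℂ) R with hK
  have hKc : IsCompact K := isCompact_closedBall _ _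
  have h0K : (0 : Fin d → ℂ) ∈ K := Metric.mem_closedBall_self hR0.le
  obtain ⟨z₀, hz₀K, hmin⟩ := hKc.exists_isMinOn ⟨0, h0K⟩ (G_continuous A yC c).continuousOn
  refine ⟨z₀, fun z => ?_⟩
  by_cases hz : z ∈ K
  · exact hmin hz
  · have hnorm : ¬ (‖z‖ ≤ R) := by
      intro h
      exact hz (by simpa [hK, Metric.mem_closedBall, dist_zero_right] using h)
    rw [pi_norm_le_iff_of_nonneg hR0.le] at hnorm
    push_neg at hnorm
    obtain ⟨k, hk⟩ := hnorm
    have h1 : c * R < c * norm (z k) := by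
      apply mul_lt_mul_of_pos_left _ hc
      simpa using hk
    have h2 : c * norm (z k) ≤ c * ∑ k', norm (z k') := by
      apply mul_le_mul_of_nonneg_left _ hc.le
      exact Finset.single_le_sum (fun k' _ => norm_nonneg (z k')) (Finset.mem_univ k)
    have hcR : c * R = G A yC c 0 + c := by
      rw [hR]
      field_simp
    have h0 : G A yC c 0 < c * R := by rw [hcR]; linarith
    have h4 : c * ∑ k', norm (z k') ≤ G A yC c z := by
      rw [G]
      have hsq : (0:ℝ) ≤ (1 / 2) * (∑ i, norm ((A *ᵥ z) i - yC i) ^ 2) := by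
        apply mul_nonneg (by norm_num)
        exact Finset.sum_nonneg fun i _ => sq_nonneg _
      linarith
    have h3 : G A yC c 0 < G A yC c z := by linarith
    exact le_of_lt (lt_of_le_of_lt (hmin h0K) h3)

lemma sq_abs_add_smul (p q : ℂ) (t : ℝ) :
    norm (p + (t : ℂ) * q) ^ 2 =
      norm p ^ 2 + 2 * t * (p * (starRingEnd ℂ) q).re + t ^ 2 * norm q ^ 2 := by
  rw [Complex.sq_norm, Complex.sq_norm, Complex.sq_norm, Complex.normSq_add]
  rw [Complex.normSq_mul, Complex.normSq_ofReal]
  have h1 : (p * (starRingEnd ℂ) ((t:ℂ) * q)).re = t * (p * (starRingEnd ℂ) q).re := by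
    rw [_root_.map_mul, Complex.conj_ofReal]
    have : p * ((t:ℂ) * (starRingEnd ℂ) q) = (t:ℂ) * (p * (starRingEnd ℂ) q) := by ring
    rw [this, Complex.re_ofReal_mul]
  rw [h1]
  ring

/-- first-order optimality condition -/
lemma first_order (A : Matrix (Fin n) (Fin d) ℂ) (yC : Fin n → ℂ) {c : ℝ} (hc : 0 < c)
    (z₁ : Fin d → ℂ) (hmin : ∀ z, G A yC c z₁ ≤ G A yC c z)
    (w : Fin d → ℂ) (L : ℝ)
    (hL : ∀ t : ℝ, 0 < t → t ≤ 1 →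
      ∑ k, norm (z₁ k + (t : ℂ) * w k) ≤ ∑ k, norm (z₁ k) + t * L) :
    0 ≤ (∑ i, (((A *ᵥ z₁) i - yC i) * (starRingEnd ℂ) ((A *ᵥ w) i)).re) + c * L := by
  set D : ℝ := ∑ i, (((A *ᵥ z₁) i - yC i) * (starRingEnd ℂ) ((A *ᵥ w) i)).re with hD
  set Q : ℝ := ∑ i, norm ((A *ᵥ w) i) ^ 2 with hQ
  have hQ0 : 0 ≤ Q := Finset.sum_nonneg fun i _ => sq_nonneg _
  have key : ∀ t : ℝ, 0 < t → t ≤ 1 → 0 ≤ D + (t / 2) * Q + c * L := by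
    intro t ht ht1
    have hG := hmin (z₁ + (t : ℂ) • w)
    have hmv : A *ᵥ (z₁ + (t : ℂ) • w) = fun i => (A *ᵥ z₁) i + (t : ℂ) * (A *ᵥ w) i := by
      rw [Matrix.mulVec_add, Matrix.mulVec_smul]
      ext i
      simp [Pi.smul_apply, smul_eq_mul]
    have hquad : ∑ i, norm ((A *ᵥ (z₁ + (t:ℂ) • w)) i - yC i) ^ 2
        = (∑ i, norm ((A *ᵥ z₁) i - yC i) ^ 2) + 2 * t * D + t ^ 2 * Q := by
      rw [hmv]
      have : ∀ i : Fin n, norm ((A *ᵥ z₁) i + (t:ℂ) * (A *ᵥ w) i - yC i) ^ 2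
          = norm ((A *ᵥ z₁) i - yC i) ^ 2
            + 2 * t * (((A *ᵥ z₁) i - yC i) * (starRingEnd ℂ) ((A *ᵥ w) i)).re
            + t ^ 2 * norm ((A *ᵥ w) i) ^ 2 := by
        intro i
        have := sq_abs_add_smul ((A *ᵥ z₁) i - yC i) ((A *ᵥ w) i) t
        convert this using 2
        ring
      simp only [this]
      rw [Finset.sum_add_distrib, Finset.sum_add_distrib, ← Finset.mul_sum, ← Finset.mul_sum]
    have hl1 : c * ∑ k, norm ((z₁ + (t:ℂ) • w) k)
        ≤ c * ∑ k, norm (z₁ k) + c * (t * L) := by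
      rw [← mul_add]
      apply mul_le_mul_of_nonneg_left _ hc.le
      have := hL t ht ht1
      simpa [Pi.add_apply, Pi.smul_apply, smul_eq_mul] using this
    rw [G, G, hquad] at hG
    have h2 : 0 ≤ t * D + (t ^ 2 / 2) * Q + c * (t * L) := by
      have := hl1
      nlinarith [hG]
    have h3 : 0 ≤ t * (D + (t / 2) * Q + c * L) := by
      calc 0 ≤ t * D + (t ^ 2 / 2) * Q + c * (t * L) := h2
        _ = t * (D + (t / 2) * Q + c * L) := by ring
    nlinarith [h3]
  by_contra hcon
  push_neg at hcon
  set ε : ℝ := -(D + c * L) with hε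
  have hε0 : 0 < ε := by simp [hε]; linarith
  set t : ℝ := min 1 (ε / (Q + 1)) with htdef
  have ht0 : 0 < t := lt_min one_pos (by positivity)
  have ht1 : t ≤ 1 := min_le_left _ _
  have hkey := key t ht0 ht1
  have htQ : (t / 2) * Q < ε := by
    have h1 : t ≤ ε / (Q + 1) := min_le_right _ _
    have h2 : (t / 2) * Q ≤ (ε / (Q + 1)) * Q := by
      apply mul_le_mul_of_nonneg_right _ hQ0
      linarith
    have h3 : (ε / (Q + 1)) * Q < ε := by
      rw [div_mul_eq_mul_div, div_lt_iff₀ (by linarith)]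
      nlinarith
    linarith
  have : D + (t / 2) * Q + c * L < 0 := by
    have : D + c * L = -ε := by rw [hε]; ring
    linarith
  linarith


lemma sym_min (hd : 0 < d) (A : Matrix (Fin n) (Fin d) ℂ)
    (hA : ∀ (i : Fin n) (k : Fin d), haveI : NeZero d := ⟨hd.ne'⟩
      A i (-k) = (starRingEnd ℂ) (A i k))
    (y : Fin n → ℝ) {c : ℝ} (hc : 0 < c)
    (z₀ : Fin d → ℂ) (hmin : ∀ z, G A (fun i => (y i : ℂ)) c z₀ ≤ G A (fun i => (y i : ℂ)) c z) :
    ∃ z₁, (∀ z, G A (fun i => (y i : ℂ)) c z₁ ≤ G A (fun i => (y i : ℂ)) c z) ∧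
      ∀ i, (A *ᵥ z₁) i = (((A *ᵥ z₁) i).re : ℂ) := by
  haveI : NeZero d := ⟨hd.ne'⟩
  set yC : Fin n → ℂ := fun i => (y i : ℂ) with hyC
  set z₀' : Fin d → ℂ := fun k => (starRingEnd ℂ) (z₀ (-k)) with hz₀'
  have hmv' : ∀ i, (A *ᵥ z₀') i = (starRingEnd ℂ) ((A *ᵥ z₀) i) := by
    intro i
    show ∑ k, A i k * (starRingEnd ℂ) (z₀ (-k)) = (starRingEnd ℂ) (∑ k, A i k * z₀ k)
    rw [map_sum]
    rw [← Equiv.sum_comp (Equiv.neg (Fin d)) (fun k => A i k * (starRingEnd ℂ) (z₀ (-k)))]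
    refine Finset.sum_congr rfl (fun k _ => ?_)
    simp only [Equiv.neg_apply, neg_neg]
    rw [hA i k, ← _root_.map_mul]
  set z₁ : Fin d → ℂ := fun k => (z₀ k + z₀' k) / 2 with hz₁
  have hmv₁ : ∀ i, (A *ᵥ z₁) i = ((((A *ᵥ z₀) i).re : ℝ) : ℂ) := by
    intro i
    show ∑ k, A i k * ((z₀ k + z₀' k) / 2) = _
    have : ∀ k, A i k * ((z₀ k + z₀' k) / 2) = (A i k * z₀ k + A i k * z₀' k) / 2 := by
      intro k; ring
    simp only [this]
    rw [← Finset.sum_div, Finset.sum_add_distrib]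
    have e1 : ∑ k, A i k * z₀ k = (A *ᵥ z₀) i := rfl
    have e2 : ∑ k, A i k * z₀' k = (A *ᵥ z₀') i := rfl
    rw [e1, e2, hmv' i, Complex.add_conj]
    push_cast
    ring
  have hreal : ∀ i, (A *ᵥ z₁) i = (((A *ᵥ z₁) i).re : ℂ) := by
    intro i
    rw [hmv₁ i]
    simp
  refine ⟨z₁, fun z => le_trans ?_ (hmin z), hreal⟩
  -- G z₁ ≤ G z₀
  rw [G, G]
  have hquad : ∑ i, norm ((A *ᵥ z₁) i - yC i) ^ 2
      ≤ ∑ i, norm ((A *ᵥ z₀) i - yC i) ^ 2 := by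
    apply Finset.sum_le_sum
    intro i _
    rw [hmv₁ i]
    have h1 : ((((A *ᵥ z₀) i).re : ℝ) : ℂ) - yC i = ((((A *ᵥ z₀) i).re - y i : ℝ) : ℂ) := by
      rw [hyC]; push_cast; ring
    rw [h1, Complex.sq_norm, Complex.sq_norm, Complex.normSq_ofReal, Complex.normSq_apply]
    have h2 : ((A *ᵥ z₀) i - yC i).re = ((A *ᵥ z₀) i).re - y i := by
      rw [hyC]; simp
    have h3 : (((A *ᵥ z₀) i - yC i).im) ^ 2 ≥ 0 := sq_nonneg _
    rw [h2]
    nlinarith [sq_nonneg (((A *ᵥ z₀) i - yC i).im)]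
  have hl1 : ∑ k, norm (z₁ k) ≤ ∑ k, norm (z₀ k) := by
    have hsum' : ∑ k, norm (z₀' k) = ∑ k, norm (z₀ k) := by
      rw [← Equiv.sum_comp (Equiv.neg (Fin d)) (fun k => norm (z₀ k))]
      refine Finset.sum_congr rfl (fun k _ => ?_)
      simp [hz₀']
    have : ∀ k, norm (z₁ k) ≤ (norm (z₀ k) + norm (z₀' k)) / 2 := by
      intro k
      rw [hz₁]
      calc norm ((z₀ k + z₀' k) / 2)
          = norm (z₀ k + z₀' k) / 2 := by
            rw [norm_div]
            norm_num
        _ ≤ (norm (z₀ k) + norm (z₀' k)) / 2 := by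
            linarith [norm_add_le (z₀ k) (z₀' k)]
    calc ∑ k, norm (z₁ k)
        ≤ ∑ k, (norm (z₀ k) + norm (z₀' k)) / 2 :=
          Finset.sum_le_sum (fun k _ => this k)
      _ = (∑ k, norm (z₀ k) + ∑ k, norm (z₀' k)) / 2 := by
          rw [← Finset.sum_div, Finset.sum_add_distrib]
      _ = ∑ k, norm (z₀ k) := by rw [hsum']; ring
  have h12 : (0:ℝ) ≤ 1/2 := by norm_num
  have := mul_le_mul_of_nonneg_left hquad h12
  have := mul_le_mul_of_nonneg_left hl1 hc.le
  linarith

lemma dft_conj_col (hd : 0 < d) (t k : Fin d) :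
    haveI : NeZero d := ⟨hd.ne'⟩
    dftMatrix d t (-k) = (starRingEnd ℂ) (dftMatrix d t k) := by
  haveI : NeZero d := ⟨hd.ne'⟩
  rw [dft_apply, dft_apply, _root_.map_mul, conj_ce]
  have h1 : (starRingEnd ℂ) (1 / ((Real.sqrt d : ℝ) : ℂ)) = 1 / ((Real.sqrt d : ℝ) : ℂ) := by
    rw [map_div₀, _root_.map_one, Complex.conj_ofReal]
  rw [h1]
  congr 1
  apply ce_eq_of_dvd
  have h2 := fin_sub_coe hd 0 k
  have h3 : ((0 : Fin d) : ℤ) = 0 := by simp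
  have h4 : (d : ℤ) ∣ (((0 : Fin d) - k : Fin d) : ℤ) + (k : ℤ) := by
    have := h2
    rw [h3] at this
    simpa [sub_eq_add_neg] using this
  have h5 : ((0 : Fin d) - k : Fin d) = -k := by rw [zero_sub]
  rw [h5] at h4
  obtain ⟨s, hs⟩ := h4
  refine ⟨-(t : ℤ) * s, ?_⟩
  have : (-(((t:ℤ)) * (((-k : Fin d)) : ℤ)) - -(-((t:ℤ) * (k:ℤ))))
      = -(t:ℤ) * ((((-k : Fin d)) : ℤ) + (k:ℤ)) := by ring
  rw [this, hs]
  ring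

lemma A_conj_col (hd : 0 < d) (X : Matrix (Fin n) (Fin d) ℝ) (i : Fin n) (k : Fin d) :
    haveI : NeZero d := ⟨hd.ne'⟩
    (X.map Complex.ofReal * dftMatrix d) i (-k)
      = (starRingEnd ℂ) ((X.map Complex.ofReal * dftMatrix d) i k) := by
  haveI : NeZero d := ⟨hd.ne'⟩
  rw [Matrix.mul_apply, Matrix.mul_apply, map_sum]
  refine Finset.sum_congr rfl (fun t _ => ?_)
  rw [_root_.map_mul, dft_conj_col hd t k]
  simp [Matrix.map_apply]

/-- Strong duality witness. -/
lemma strong_dual_witness (hd : 0 < d) (X : Matrix (Fin n) (Fin d) ℝ) (y : Fin n → ℝ)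
    {c : ℝ} (hc : 0 < c) :
    ∃ (v : Fin n → ℝ) (z₁ : Fin d → ℂ),
      (∀ k, norm ((vecMul (fun i => ((v i : ℝ) : ℂ))
          (X.map Complex.ofReal * dftMatrix d)) k) ≤ c) ∧
      (∀ z, G (X.map Complex.ofReal * dftMatrix d) (fun i => (y i : ℂ)) c z₁
          ≤ G (X.map Complex.ofReal * dftMatrix d) (fun i => (y i : ℂ)) c z) ∧
      (∑ i, v i * y i) - (1 / 2) * (∑ i, v i ^ 2)
        = G (X.map Complex.ofReal * dftMatrix d) (fun i => (y i : ℂ)) c z₁ := by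
  classical
  haveI : NeZero d := ⟨hd.ne'⟩
  set A := X.map Complex.ofReal * dftMatrix d with hA
  set yC : Fin n → ℂ := fun i => (y i : ℂ) with hyC
  obtain ⟨z₀, hmin₀⟩ := exists_min A yC hc
  obtain ⟨z₁, hmin, hreal⟩ := sym_min hd A (fun i k => A_conj_col hd X i k) y hc z₀ hmin₀
  set ρ : Fin n → ℂ := A *ᵥ z₁ with hρ
  set v : Fin n → ℝ := fun i => y i - (ρ i).re with hv
  have hρy : ∀ i, ρ i - yC i = ((-(v i) : ℝ) : ℂ) := by
    intro i
    rw [hv, hyC]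
    simp only
    rw [hreal i]
    push_cast
    rw [Complex.ofReal_re]
    ring
  refine ⟨v, z₁, ?_, hmin, ?_⟩
  · -- feasibility
    intro k
    set g : ℂ := (vecMul (fun i => ((v i : ℝ) : ℂ)) A) k with hg
    by_cases hg0 : g = 0
    · rw [hg0]; simp; exact hc.le
    have habs : ∀ (φ : ℂ), norm φ = 1 → (g * φ).re ≤ c := by
      intro φ hφ
      set w : Fin d → ℂ := fun k' => if k' = k then φ else 0 with hw
      have hAw : ∀ i, (A *ᵥ w) i = A i k * φ := by
        intro i
        show ∑ k', A i k' * w k' = A i k * φ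
        rw [hw]
        simp [Finset.sum_ite_eq']
      have hL : ∀ t : ℝ, 0 < t → t ≤ 1 →
          ∑ k', norm (z₁ k' + (t : ℂ) * w k') ≤ ∑ k', norm (z₁ k') + t * 1 := by
        intro t ht _
        have hb : ∀ k', norm (z₁ k' + (t : ℂ) * w k')
            ≤ norm (z₁ k') + t * (if k' = k then 1 else 0) := by
          intro k'
          by_cases hkk : k' = k
          · subst hkk
            rw [hw]
            simp only [if_pos rfl]
            calc norm (z₁ k' + (t:ℂ) * φ) ≤ norm (z₁ k') + norm ((t:ℂ) * φ) :=
                  norm_add_le _ _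
              _ = norm (z₁ k') + t * 1 := by
                  rw [norm_mul, hφ, Complex.norm_real, Real.norm_eq_abs, abs_of_pos ht]
          · rw [hw]
            simp [hkk]
        calc ∑ k', norm (z₁ k' + (t : ℂ) * w k')
            ≤ ∑ k', (norm (z₁ k') + t * (if k' = k then 1 else 0)) :=
              Finset.sum_le_sum (fun k' _ => hb k')
          _ = ∑ k', norm (z₁ k') + t * 1 := by
              rw [Finset.sum_add_distrib]
              congr 1
              rw [← Finset.mul_sum]
              congr 1
              simp
      have h1 := first_order A yC hc z₁ hmin w 1 hL
      have h2 : ∑ i, ((ρ i - yC i) * (starRingEnd ℂ) ((A *ᵥ w) i)).re = -((g * φ).re) := by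
        have e1 : ∀ i, ((ρ i - yC i) * (starRingEnd ℂ) ((A *ᵥ w) i)).re
            = -(v i * (A i k * φ).re) := by
          intro i
          rw [hρy i, hAw i, Complex.re_ofReal_mul, Complex.conj_re]
          ring
        have e2 : (g * φ).re = ∑ i, v i * (A i k * φ).re := by
          rw [hg]
          have e3 : (vecMul (fun i => ((v i : ℝ) : ℂ)) A) k = ∑ i, ((v i : ℝ) : ℂ) * A i k := rfl
          rw [e3, Finset.sum_mul, Complex.re_sum]
          refine Finset.sum_congr rfl (fun i _ => ?_)
          rw [mul_assoc, Complex.re_ofReal_mul]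
        simp only [e1]
        rw [e2, ← Finset.sum_neg_distrib]
      rw [h2] at h1
      linarith
    set φ : ℂ := (starRingEnd ℂ) g / ((norm g : ℝ) : ℂ) with hφdef
    have hgabs : norm g ≠ 0 := by
      simpa using hg0
    have hφ1 : norm φ = 1 := by
      rw [hφdef, norm_div, Complex.norm_conj, Complex.norm_real, Real.norm_eq_abs,
        _root_.abs_of_nonneg (norm_nonneg g)]
      field_simp
    have hle := habs φ hφ1
    have hgφ : g * φ = ((norm g : ℝ) : ℂ) := by
      rw [hφdef, ← mul_div_assoc, Complex.mul_conj, Complex.normSq_eq_norm_sq]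
      rw [show ((norm g ^ 2 : ℝ) : ℂ) = ((norm g : ℝ) : ℂ) ^ 2 by push_cast; ring]
      have : ((norm g : ℝ) : ℂ) ≠ 0 := by
        simpa using hgabs
      field_simp
    rw [hgφ] at hle
    simpa using hle
  · -- value equality
    set L : ℝ := ∑ k, norm (z₁ k) with hLdef
    set T : ℝ := ∑ i, v i * (ρ i).re with hTdef
    have hterm : ∀ i, ((ρ i - yC i) * (starRingEnd ℂ) (ρ i)).re = -(v i * (ρ i).re) := by
      intro i
      rw [hρy i]
      nth_rewrite 1 [hreal i]
      rw [Complex.conj_ofReal, ← Complex.ofReal_mul, Complex.ofReal_re]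
      ring
    have hplus : 0 ≤ -T + c * L := by
      have hL : ∀ t : ℝ, 0 < t → t ≤ 1 →
          ∑ k, norm (z₁ k + (t : ℂ) * z₁ k) ≤ ∑ k, norm (z₁ k) + t * L := by
        intro t ht _
        have : ∀ k, norm (z₁ k + (t : ℂ) * z₁ k) = (1 + t) * norm (z₁ k) := by
          intro k
          rw [show z₁ k + (t : ℂ) * z₁ k = (((1 + t : ℝ)) : ℂ) * z₁ k by push_cast; ring]
          rw [norm_mul, Complex.norm_real, Real.norm_eq_abs, abs_of_pos (by linarith)]
        simp only [this]
        rw [← Finset.mul_sum, ← hLdef]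
        linarith
      have h1 := first_order A yC hc z₁ hmin z₁ L hL
      have h2 : ∑ i, ((ρ i - yC i) * (starRingEnd ℂ) ((A *ᵥ z₁) i)).re = -T := by
        rw [hTdef, ← Finset.sum_neg_distrib]
        exact Finset.sum_congr rfl (fun i _ => hterm i)
      rw [h2] at h1
      linarith
    have hminus : 0 ≤ T - c * L := by
      have hL : ∀ t : ℝ, 0 < t → t ≤ 1 →
          ∑ k, norm (z₁ k + (t : ℂ) * (-z₁ k)) ≤ ∑ k, norm (z₁ k) + t * (-L) := by
        intro t ht ht1
        have : ∀ k, norm (z₁ k + (t : ℂ) * (-z₁ k)) = (1 - t) * norm (z₁ k) := by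
          intro k
          rw [show z₁ k + (t : ℂ) * (-z₁ k) = (((1 - t : ℝ)) : ℂ) * z₁ k by push_cast; ring]
          rw [norm_mul, Complex.norm_real, Real.norm_eq_abs, _root_.abs_of_nonneg (by linarith)]
        simp only [this]
        rw [← Finset.mul_sum, ← hLdef]
        linarith
      have h1 := first_order A yC hc z₁ hmin (fun k => -z₁ k) (-L) hL
      have hAneg : ∀ i, (A *ᵥ (fun k => -z₁ k)) i = -ρ i := by
        intro i
        show ∑ k, A i k * (-z₁ k) = -(∑ k, A i k * z₁ k)
        rw [← Finset.sum_neg_distrib]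
        exact Finset.sum_congr rfl (fun k _ => by ring)
      have h2 : ∑ i, ((ρ i - yC i) * (starRingEnd ℂ) ((A *ᵥ (fun k => -z₁ k)) i)).re = T := by
        rw [hTdef]
        refine Finset.sum_congr rfl (fun i _ => ?_)
        rw [hAneg i, map_neg]
        have := hterm i
        have e : (ρ i - yC i) * -(starRingEnd ℂ) (ρ i) = -((ρ i - yC i) * (starRingEnd ℂ) (ρ i)) := by
          ring
        rw [e, Complex.neg_re, this]
        ring
      rw [h2] at h1
      linarith
    have hTL : T = c * L := by linarith
    -- final value computation
    have hquad : ∀ i, norm (ρ i - yC i) ^ 2 = v i ^ 2 := by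
      intro i
      rw [hρy i, Complex.sq_norm, Complex.normSq_ofReal]
      ring
    have hG : G A yC c z₁ = (1 / 2) * (∑ i, v i ^ 2) + c * L := by
      rw [G, ← hLdef]
      congr 2
      exact Finset.sum_congr rfl (fun i _ => hquad i)
    have hT2 : T = (∑ i, v i * y i) - ∑ i, v i ^ 2 := by
      rw [hTdef, ← Finset.sum_sub_distrib]
      refine Finset.sum_congr rfl (fun i _ => ?_)
      have : (ρ i).re = y i - v i := by rw [hv]; ring
      rw [this]
      ring
    have : G A yC c z₁ = G A (fun i => (y i : ℂ)) c z₁ := rfl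
    rw [← this, hG]
    linarith

/-- weak duality between the sup and inf problems -/
lemma weak_dual (A : Matrix (Fin n) (Fin d) ℂ) (y : Fin n → ℝ) {c : ℝ} (hc : 0 ≤ c)
    (v : Fin n → ℝ)
    (hv : ∀ k, norm ((vecMul (fun i => ((v i : ℝ) : ℂ)) A) k) ≤ c)
    (z : Fin d → ℂ) :
    (∑ i, v i * y i) - (1 / 2) * (∑ i, v i ^ 2) ≤ G A (fun i => (y i : ℂ)) c z := by
  classical
  set yC : Fin n → ℂ := fun i => (y i : ℂ) with hyC
  set r : Fin n → ℂ := fun i => (A *ᵥ z) i - yC i with hr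
  have hpt : ∀ i, 0 ≤ (1/2) * norm (r i) ^ 2 + (1/2) * v i ^ 2 + v i * (r i).re := by
    intro i
    have h1 : norm (r i) ^ 2 = (r i).re ^ 2 + (r i).im ^ 2 := by
      rw [Complex.sq_norm, Complex.normSq_apply]; ring
    rw [h1]
    nlinarith [sq_nonneg ((r i).re + v i), sq_nonneg (r i).im]
  have hsum : 0 ≤ (1/2) * (∑ i, norm (r i) ^ 2) + (1/2) * (∑ i, v i ^ 2)
      + ∑ i, v i * (r i).re := by
    have h0 := Finset.sum_nonneg (fun i (_ : i ∈ Finset.univ) => hpt i)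
    calc (0:ℝ) ≤ ∑ i, ((1/2) * norm (r i) ^ 2 + (1/2) * v i ^ 2 + v i * (r i).re) := h0
      _ = (1/2) * (∑ i, norm (r i) ^ 2) + (1/2) * (∑ i, v i ^ 2)
          + ∑ i, v i * (r i).re := by
        rw [Finset.sum_add_distrib, Finset.sum_add_distrib, ← Finset.mul_sum, ← Finset.mul_sum]
  have hcross : ∑ i, v i * (r i).re
      = (∑ k, ((vecMul (fun i => ((v i : ℝ) : ℂ)) A) k * z k)).re - ∑ i, v i * y i := by
    have e1 : ∀ i, v i * (r i).re = (((v i : ℝ) : ℂ) * r i).re := by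
      intro i; rw [Complex.re_ofReal_mul]
    simp only [e1]
    rw [← Complex.re_sum]
    have e2 : ∑ i, ((v i : ℝ) : ℂ) * r i
        = (∑ i, ((v i : ℝ) : ℂ) * (A *ᵥ z) i) - ∑ i, ((v i : ℝ) : ℂ) * yC i := by
      rw [← Finset.sum_sub_distrib]
      refine Finset.sum_congr rfl (fun i _ => ?_)
      rw [hr]; ring
    rw [e2]
    have e3 : ∑ i, ((v i : ℝ) : ℂ) * (A *ᵥ z) i
        = ∑ k, ((vecMul (fun i => ((v i : ℝ) : ℂ)) A) k * z k) := by
      exact Matrix.dotProduct_mulVec _ A z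
    have e4 : (∑ i, ((v i : ℝ) : ℂ) * yC i) = ((∑ i, v i * y i : ℝ) : ℂ) := by
      rw [hyC]; push_cast; rfl
    rw [e3, e4, Complex.sub_re, Complex.ofReal_re]
  have hbdd : (∑ k, ((vecMul (fun i => ((v i : ℝ) : ℂ)) A) k * z k)).re
      ≤ c * ∑ k, norm (z k) := by
    rw [Complex.re_sum, Finset.mul_sum]
    apply Finset.sum_le_sum
    intro k _
    have h1 : ((vecMul (fun i => ((v i : ℝ) : ℂ)) A) k * z k).re
        ≤ norm ((vecMul (fun i => ((v i : ℝ) : ℂ)) A) k * z k) := by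
      have := Complex.abs_re_le_norm ((vecMul (fun i => ((v i : ℝ) : ℂ)) A) k * z k)
      exact (abs_le.mp this).2
    have h2 : norm ((vecMul (fun i => ((v i : ℝ) : ℂ)) A) k * z k)
        ≤ c * norm (z k) := by
      rw [norm_mul]
      exact mul_le_mul_of_nonneg_right (hv k) (norm_nonneg _)
    linarith
  rw [G]
  have hre : (1/2) * (∑ i, norm ((A *ᵥ z) i - yC i) ^ 2)
      = (1/2) * ∑ i, norm (r i) ^ 2 := rfl
  rw [hre]
  rw [hcross] at hsum
  linarith


end Opt

lemma l2norm_sq {n : ℕ} (a : Fin n → ℝ) : (l2norm a) ^ 2 = ∑ i, a i ^ 2 := by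
  rw [l2norm, Real.sq_sqrt (Finset.sum_nonneg (fun i _ => sq_nonneg _))]

lemma fval_eq {n : ℕ} (v y : Fin n → ℝ) :
    -(1 / 2) * (l2norm (v - y)) ^ 2 + (1 / 2) * (l2norm y) ^ 2
      = (∑ i, v i * y i) - (1 / 2) * (∑ i, v i ^ 2) := by
  rw [l2norm_sq, l2norm_sq]
  have h1 : ∑ i, (v - y) i ^ 2 = ∑ i, (v i ^ 2 - 2 * (v i * y i) + y i ^ 2) := by
    refine Finset.sum_congr rfl (fun i _ => ?_)
    rw [Pi.sub_apply]
    ring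
  rw [h1, Finset.sum_add_distrib, Finset.sum_sub_distrib, ← Finset.mul_sum]
  ring

/-- Two-layer linear circular CNN: the dual of the rescaled nonconvex problem is the
`ℓ_∞`-constrained concave maximization (weak duality), and strong duality holds between
this dual and its own dual, the `ℓ₁`-regularized least squares in the spectral domain. -/
theorem circular_linear_duality (n d : ℕ) (hd : 0 < d) (m : ℕ)
    (X : Matrix (Fin n) (Fin d) ℝ) (y : Fin n → ℝ) (β : ℝ) (hβ : 0 < β) :
    (∀ p ∈ {p : ℝ | ∃ (u : Fin m → Fin d → ℝ) (w : Fin m → Fin d → ℝ),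
        (∀ j, l2norm (u j) ≤ 1) ∧
        p = (1 / 2) * (l2norm ((∑ j, X *ᵥ (Matrix.circulant (u j) *ᵥ w j)) - y)) ^ 2
          + β * ∑ j, l2norm (w j)},
      sSup {x : ℝ | ∃ v : Fin n → ℝ,
        (∀ i : Fin d, 
            ‖(Matrix.vecMul (fun i => ((v i : ℝ) : ℂ)) (X.map Complex.ofReal * dftMatrix d)) i‖
          ≤ β / Real.sqrt d) ∧
        x = -(1 / 2) * (l2norm (v - y)) ^ 2 + (1 / 2) * (l2norm y) ^ 2} ≤ p) ∧
    sSup {x : ℝ | ∃ v : Fin n → ℝ,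
        (∀ i : Fin d, 
            ‖(Matrix.vecMul (fun i => ((v i : ℝ) : ℂ)) (X.map Complex.ofReal * dftMatrix d)) i‖
          ≤ β / Real.sqrt d) ∧
        x = -(1 / 2) * (l2norm (v - y)) ^ 2 + (1 / 2) * (l2norm y) ^ 2} =
    sInf {x : ℝ | ∃ z : Fin d → ℂ,
        x = (1 / 2) * (∑ i, 
              ‖((X.map Complex.ofReal * dftMatrix d) *ᵥ z) i - ((y i : ℝ) : ℂ)‖ ^ 2)
          + (β / Real.sqrt d) * ∑ i, ‖z i‖} := by
  classical
  have hsd : 0 < Real.sqrt d := Real.sqrt_pos.mpr (by exact_mod_cast hd)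
  have hc : 0 < β / Real.sqrt d := div_pos hβ hsd
  set c : ℝ := β / Real.sqrt d with hcdef
  set A := X.map Complex.ofReal * dftMatrix d with hAdef
  set S := {x : ℝ | ∃ v : Fin n → ℝ,
      (∀ i : Fin d, norm
          ((Matrix.vecMul (fun i => ((v i : ℝ) : ℂ)) A) i) ≤ c) ∧
      x = -(1 / 2) * (l2norm (v - y)) ^ 2 + (1 / 2) * (l2norm y) ^ 2} with hSdef
  set P := {x : ℝ | ∃ z : Fin d → ℂ,
      x = (1 / 2) * (∑ i, norm ((A *ᵥ z) i - ((y i : ℝ) : ℂ)) ^ 2)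
        + c * ∑ i, norm (z i)} with hPdef
  have hGP : ∀ x, x ∈ P ↔ ∃ z, x = G A (fun i => (y i : ℂ)) c z := by
    intro x
    constructor
    · rintro ⟨z, rfl⟩; exact ⟨z, rfl⟩
    · rintro ⟨z, rfl⟩; exact ⟨z, rfl⟩
  -- every element of S is ≤ every G value
  have hSle : ∀ x ∈ S, ∀ z : Fin d → ℂ, x ≤ G A (fun i => (y i : ℂ)) c z := by
    rintro x ⟨v, hfeas, rfl⟩ z
    rw [fval_eq]
    exact weak_dual A y hc.le v hfeas z
  have hPlb : ∀ x ∈ P, (0:ℝ) ≤ x := by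
    intro x hx
    obtain ⟨z, rfl⟩ := (hGP x).mp hx
    exact G_nonneg A _ hc.le z
  have hPne : P.Nonempty := ⟨G A (fun i => (y i : ℂ)) c 0, (hGP _).mpr ⟨0, rfl⟩⟩
  constructor
  · -- weak duality with the nonconvex problem
    rintro p ⟨u, w, hu, rfl⟩
    have hp0 : (0:ℝ) ≤ (1 / 2) * (l2norm ((∑ j, X *ᵥ (Matrix.circulant (u j) *ᵥ w j)) - y)) ^ 2
        + β * ∑ j, l2norm (w j) := by
      have h1 : 0 ≤ ∑ j, l2norm (w j) :=
        Finset.sum_nonneg (fun j _ => Real.sqrt_nonneg _)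
      have h2 : 0 ≤ (l2norm ((∑ j, X *ᵥ (Matrix.circulant (u j) *ᵥ w j)) - y)) ^ 2 := sq_nonneg _
      nlinarith
    apply Real.sSup_le _ hp0
    rintro x ⟨v, hfeas, rfl⟩
    rw [fval_eq]
    -- expand the quadratic term
    set F : Fin m → Fin n → ℝ := fun j => X *ᵥ (Matrix.circulant (u j) *ᵥ w j) with hF
    set r : Fin n → ℝ := (∑ j, F j) - y with hrdef
    have hquad : (l2norm ((∑ j, F j) - y)) ^ 2 = ∑ i, r i ^ 2 := by
      rw [l2norm_sq]
    have hpt : ∀ i, 0 ≤ (1/2) * r i ^ 2 + (1/2) * v i ^ 2 + v i * r i := by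
      intro i; nlinarith [sq_nonneg (r i + v i)]
    have hsum : 0 ≤ (1/2) * (∑ i, r i ^ 2) + (1/2) * (∑ i, v i ^ 2) + ∑ i, v i * r i := by
      have h0 := Finset.sum_nonneg (fun i (_ : i ∈ Finset.univ) => hpt i)
      calc (0:ℝ) ≤ ∑ i, ((1/2) * r i ^ 2 + (1/2) * v i ^ 2 + v i * r i) := h0
        _ = (1/2) * (∑ i, r i ^ 2) + (1/2) * (∑ i, v i ^ 2) + ∑ i, v i * r i := by
          rw [Finset.sum_add_distrib, Finset.sum_add_distrib, ← Finset.mul_sum, ← Finset.mul_sum]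
    have hcross : ∑ i, v i * r i = (∑ j, ∑ i, v i * F j i) - ∑ i, v i * y i := by
      have e1 : ∀ i, v i * r i = (∑ j, v i * F j i) - v i * y i := by
        intro i
        rw [hrdef]
        simp only [Pi.sub_apply, Finset.sum_apply]
        rw [mul_sub, Finset.mul_sum]
      simp only [e1]
      rw [Finset.sum_sub_distrib]
      congr 1
      exact Finset.sum_comm
    have hj : ∀ j, ∑ i, v i * F j i ≤ β * l2norm (w j) := by
      intro j
      have := key_bound hd X v β hβ hfeas (u j) (hu j) (w j)
      rw [hF]
      exact this
    have hjs : ∑ j, ∑ i, v i * F j i ≤ β * ∑ j, l2norm (w j) := by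
      rw [Finset.mul_sum]
      exact Finset.sum_le_sum (fun j _ => hj j)
    rw [hquad]
    rw [hcross] at hsum
    linarith
  · -- strong duality
    obtain ⟨v₀, z₁, hfeas₀, hmin, heq⟩ := strong_dual_witness hd X y hc
    have hSub : ∀ x ∈ S, x ≤ sInf P := by
      intro x hx
      apply le_csInf hPne
      rintro b hb
      obtain ⟨z, rfl⟩ := (hGP b).mp hb
      exact hSle x hx z
    have h1 : sSup S ≤ sInf P := by
      apply Real.sSup_le hSub
      exact le_csInf hPne hPlb
    have hmemS : (-(1 / 2) * (l2norm (v₀ - y)) ^ 2 + (1 / 2) * (l2norm y) ^ 2) ∈ S :=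
      ⟨v₀, hfeas₀, rfl⟩
    have hbddS : BddAbove S :=
      ⟨G A (fun i => (y i : ℂ)) c 0, fun x hx => hSle x hx 0⟩
    have h2 : sInf P ≤ sSup S := by
      have e1 : sInf P ≤ G A (fun i => (y i : ℂ)) c z₁ :=
        csInf_le ⟨0, fun x hx => hPlb x hx⟩ ((hGP _).mpr ⟨z₁, rfl⟩)
      have e2 : G A (fun i => (y i : ℂ)) c z₁ ≤ sSup S := by
        have := le_csSup hbddS hmemS
        rw [fval_eq, heq] at this
        exact this
      linarith
    linarith
end
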